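/- arXiv:1606.02106 — 2 statements merged into one kernel-verified Lean document; each statement's English description precedes it below -/
import Mathlib

section
/- For p in (0,1) and any λ, β > 0, one has λ^{1-p} ∫₀^{β/λ} e^{-iλs} s^{-p} ds = m(p) + i e^{-iβ} β^{-p} - i p β^{-p} ∫₁^∞ e^{-iβs} s^{-(1+p)} ds. -/
open MeasureTheory Filter

open Set Complex Real Topology

namespace Stmt1Aux

/-- The integrand `e^{-bt} t^r`. -/
noncomputable def g (r : ℝ) (b : ℂ) (t : ℝ) : ℂ :=
  Complex.exp (-(b * t)) * ((t ^ r : ℝ) : ℂ)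

lemma norm_g (r : ℝ) (b : ℂ) {t : ℝ} (ht : 0 ≤ t) :
    ‖g r b t‖ = Real.exp (-(b.re * t)) * t ^ r := by
  rw [g, norm_mul, Complex.norm_exp, Complex.norm_real,
    Real.norm_eq_abs, _root_.abs_of_nonneg (Real.rpow_nonneg ht r)]
  congr 2
  simp [Complex.mul_re]

lemma cont_g (r : ℝ) (b : ℂ) : ContinuousOn (g r b) (Ioi 0) := by
  apply ContinuousOn.mul
  · exact (Complex.continuous_exp.comp
      ((continuous_const.mul Complex.continuous_ofReal).neg)).continuousOn
  · refine Complex.continuous_ofReal.comp_continuousOn ?_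
    intro t ht
    exact (Real.continuousAt_rpow_const t r (Or.inl (ne_of_gt ht))).continuousWithinAt

lemma meas_g (r : ℝ) (b : ℂ) {a : ℝ} (ha : 0 ≤ a) :
    AEStronglyMeasurable (g r b) (volume.restrict (Ioi a)) :=
  ((cont_g r b).mono (Ioi_subset_Ioi ha)).aestronglyMeasurable measurableSet_Ioi

lemma meas_g_Ioc (r : ℝ) (b : ℂ) {β : ℝ} :
    AEStronglyMeasurable (g r b) (volume.restrict (Ioc 0 β)) :=
  ((cont_g r b).mono Ioc_subset_Ioi_self).aestronglyMeasurable measurableSet_Ioc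

lemma real_int {c r : ℝ} (hc : 0 < c) (hr : -1 < r) :
    IntegrableOn (fun t : ℝ => Real.exp (-(c * t)) * t ^ r) (Ioi 0) := by
  have h0 : IntegrableOn (fun x : ℝ => Real.exp (-x) * x ^ r) (Ioi 0) := by
    simpa using Real.GammaIntegral_convergent (by linarith : 0 < r + 1)
  have h1 : IntegrableOn (fun x : ℝ => Real.exp (-(c * x)) * (c * x) ^ r) (Ioi 0) := by
    have := (integrableOn_Ioi_comp_mul_left_iff
      (fun x : ℝ => Real.exp (-x) * x ^ r) 0 hc).mpr (by simpa using h0)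
    simpa using this
  have h2 := h1.const_mul (c ^ (-r))
  apply h2.congr
  filter_upwards [ae_restrict_mem measurableSet_Ioi] with t ht
  have ht0 : (0:ℝ) < t := ht
  show c ^ (-r) * (Real.exp (-(c * t)) * (c * t) ^ r) = Real.exp (-(c * t)) * t ^ r
  rw [Real.mul_rpow hc.le ht0.le]
  rw [show c ^ (-r) * (Real.exp (-(c * t)) * (c ^ r * t ^ r))
      = (c ^ (-r) * c ^ r) * (Real.exp (-(c * t)) * t ^ r) by ring,
    ← Real.rpow_add hc, neg_add_cancel, Real.rpow_zero, one_mul]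

lemma int_g0 {b : ℂ} (hb : 0 < b.re) {r : ℝ} (hr : -1 < r) :
    IntegrableOn (g r b) (Ioi 0) := by
  apply Integrable.mono' (real_int hb hr) (meas_g r b le_rfl)
  rw [ae_restrict_iff' measurableSet_Ioi]
  filter_upwards with t ht
  rw [norm_g r b (le_of_lt ht)]

lemma int_g_tail {b : ℂ} (hb : 0 ≤ b.re) {r : ℝ} (hr : r < -1) {a : ℝ} (ha : 0 < a) :
    IntegrableOn (g r b) (Ioi a) := by
  apply Integrable.mono' (integrableOn_Ioi_rpow_of_lt hr ha) (meas_g r b ha.le)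
  rw [ae_restrict_iff' measurableSet_Ioi]
  filter_upwards with t ht
  have ht0 : (0:ℝ) < t := ha.trans ht
  rw [norm_g r b ht0.le]
  calc Real.exp (-(b.re * t)) * t ^ r ≤ 1 * t ^ r :=
        mul_le_mul_of_nonneg_right
          (by rw [Real.exp_le_one_iff]; exact neg_nonpos.mpr (mul_nonneg hb ht0.le))
          (Real.rpow_nonneg ht0.le r)
    _ = t ^ r := one_mul _

lemma int_g_Ioc {b : ℂ} (hb : 0 ≤ b.re) {r : ℝ} (hr : -1 < r) {β : ℝ} (hβ : 0 < β) :
    IntegrableOn (g r b) (Ioc 0 β) := by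
  have hbound : IntegrableOn (fun t : ℝ => t ^ r) (Ioc 0 β) :=
    (intervalIntegrable_iff_integrableOn_Ioc_of_le hβ.le).mp
      (intervalIntegral.intervalIntegrable_rpow' hr)
  apply Integrable.mono' hbound (meas_g_Ioc r b)
  rw [ae_restrict_iff' measurableSet_Ioc]
  filter_upwards with t ht
  rw [norm_g r b ht.1.le]
  calc Real.exp (-(b.re * t)) * t ^ r ≤ 1 * t ^ r :=
        mul_le_mul_of_nonneg_right
          (by rw [Real.exp_le_one_iff]; exact neg_nonpos.mpr (mul_nonneg hb ht.1.le))
          (Real.rpow_nonneg ht.1.le r)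
    _ = t ^ r := one_mul _

lemma hasDerivAt_G (r : ℝ) {b : ℂ} (hb : b ≠ 0) {t : ℝ} (ht : 0 < t) :
    HasDerivAt (fun t : ℝ => -b⁻¹ * g r b t)
      (g r b t - (r / b) * g (r - 1) b t) t := by
  have h1 : HasDerivAt (fun t : ℝ => Complex.exp (-(b * t))) (-b * Complex.exp (-(b * t))) t := by
    have hin : HasDerivAt (fun z : ℂ => -(b * z)) (-b) (t : ℂ) := by
      exact (((hasDerivAt_id (t : ℂ)).const_mul b).neg).congr_deriv (by simp)
    have := (Complex.hasDerivAt_exp (-(b * t))).comp (t : ℂ) hin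
    simpa [mul_comm] using this.comp_ofReal
  have h2 : HasDerivAt (fun t : ℝ => ((t ^ r : ℝ) : ℂ)) (((r * t ^ (r - 1) : ℝ) : ℂ)) t :=
    (Real.hasDerivAt_rpow_const (Or.inl ht.ne')).ofReal_comp
  have h3 := (h1.mul h2).const_mul (-b⁻¹)
  refine h3.congr_deriv ?_
  simp only [g]
  push_cast
  field_simp
  ring

lemma tendsto_G_atTop (r : ℝ) {b : ℂ} (hb : 0 < b.re) :
    Tendsto (fun t : ℝ => -b⁻¹ * g r b t) atTop (𝓝 0) := by
  have hev : ∀ᶠ t : ℝ in atTop, ‖-b⁻¹ * g r b t‖ ≤ ‖b⁻¹‖ * (t ^ r * Real.exp (-b.re * t)) := by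
    filter_upwards [eventually_gt_atTop (0:ℝ)] with t ht
    have : ‖-b⁻¹ * g r b t‖ = ‖b⁻¹‖ * (Real.exp (-(b.re * t)) * t ^ r) := by
      rw [norm_mul, norm_neg]
      congr 1
      rw [g, norm_mul, Complex.norm_exp, Complex.norm_real,
        Real.norm_eq_abs, _root_.abs_of_nonneg (Real.rpow_nonneg ht.le r)]
      congr 2
      simp [Complex.mul_re]
    rw [this]
    apply le_of_eq
    ring_nf
  refine squeeze_zero_norm' hev ?_
  have := (tendsto_rpow_mul_exp_neg_mul_atTop_nhds_zero r b.re hb).const_mul ‖b⁻¹‖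
  simpa [mul_comm] using this

/-- Integration by parts on `(a, ∞)`. -/
lemma ibp {b : ℂ} (hb : 0 < b.re) {a r : ℝ} (ha : 0 ≤ a) (h : a ≠ 0 ∨ 0 ≤ r)
    (hint1 : IntegrableOn (g r b) (Ioi a)) (hint2 : IntegrableOn (g (r - 1) b) (Ioi a)) :
    ∫ t in Ioi a, g r b t
      = b⁻¹ * Complex.exp (-(b * a)) * ((a ^ r : ℝ) : ℂ)
        + (r / b) * ∫ t in Ioi a, g (r - 1) b t := by
  have hb0 : b ≠ 0 := fun h0 => by simp [h0] at hb
  have hcont : ContinuousWithinAt (fun t : ℝ => -b⁻¹ * g r b t) (Ici a) a := by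
    apply ContinuousAt.continuousWithinAt
    have hc1 : ContinuousAt (fun t : ℝ => Complex.exp (-(b * t))) a :=
      (Complex.continuous_exp.comp
        ((continuous_const.mul Complex.continuous_ofReal).neg)).continuousAt
    have hc2 : ContinuousAt (fun t : ℝ => ((t ^ r : ℝ) : ℂ)) a :=
      Complex.continuous_ofReal.continuousAt.comp (Real.continuousAt_rpow_const a r h)
    exact continuousAt_const.mul (hc1.mul hc2)
  have key := integral_Ioi_of_hasDerivAt_of_tendsto hcont
    (fun t htt => hasDerivAt_G r hb0 (ha.trans_lt htt))
    (hint1.sub (hint2.const_mul (r / b))) (tendsto_G_atTop r hb)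
  rw [integral_sub hint1 (hint2.const_mul (r / b)), MeasureTheory.integral_const_mul] at key
  have : ∫ t in Ioi a, g r b t
      = (0 - -b⁻¹ * g r b a) + (r / b) * ∫ t in Ioi a, g (r - 1) b t := by
    rw [← key]; ring
  rw [this]
  simp only [g]
  ring


noncomputable def F (p : ℝ) (b : ℂ) : ℂ := ∫ t in Ioi 0, g (-p) b t

lemma F_hasDeriv {p : ℝ} (hp : 0 < p) (hp1 : p < 1) {b : ℂ} (hb : 0 < b.re) :
    HasDerivAt (F p) (-(((1 : ℂ) - p) / b) * F p b) b := by
  have hb0 : b ≠ 0 := fun h0 => by simp [h0] at hb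
  have hε : 0 < b.re / 2 := by linarith
  have main := hasDerivAt_integral_of_dominated_loc_of_deriv_le (μ := volume.restrict (Ioi 0))
      (F := fun (x : ℂ) (t : ℝ) => g (-p) x t) (F' := fun (x : ℂ) (t : ℝ) => -(↑t * g (-p) x t))
      (x₀ := b) (bound := fun t => Real.exp (-(b.re / 2 * t)) * t ^ (1 - p)) (Metric.ball_mem_nhds b hε)
      (Eventually.of_forall fun x => meas_g (-p) x le_rfl)
      (int_g0 hb (by linarith))
      ((Complex.continuous_ofReal.aestronglyMeasurable.mul (meas_g (-p) b le_rfl)).neg)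
      ?_ (real_int hε (by linarith)) ?_
  · obtain ⟨-, hd⟩ := main
    have heq : (∫ t in Ioi 0, -(↑t * g (-p) b t)) = -∫ t in Ioi 0, g (1 - p) b t := by
      rw [MeasureTheory.integral_neg]
      congr 1
      apply setIntegral_congr_fun measurableSet_Ioi
      intro t ht
      simp only [g]
      rw [show (1 : ℝ) - p = -p + 1 by ring, Real.rpow_add_one (ne_of_gt ht)]
      push_cast
      ring
    have hibp : (∫ t in Ioi 0, g (1 - p) b t) = (((1 : ℝ) - p) / b) * ∫ t in Ioi 0, g (-p) b t := by
      have h2 : IntegrableOn (g ((1 - p) - 1) b) (Ioi 0) := by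
        rw [show (1 : ℝ) - p - 1 = -p by ring]
        exact int_g0 hb (by linarith)
      have := ibp hb (le_refl (0:ℝ)) (Or.inr (by linarith)) (int_g0 hb (by linarith)) h2
      rw [this, Real.zero_rpow (by intro h0; linarith)]
      rw [show (1 : ℝ) - p - 1 = -p by ring]
      push_cast
      ring
    rw [heq, hibp] at hd
    have hrw : -((((1:ℝ):ℂ) - (p:ℂ)) / b * ∫ t in Ioi 0, g (-p) b t)
        = -(((1 : ℂ) - ↑p) / b) * F p b := by
      simp only [F]; push_cast; ring
    rw [hrw] at hd
    exact hd
  · -- bound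
    filter_upwards [ae_restrict_mem measurableSet_Ioi] with t ht
    intro x hx
    have ht0 : (0:ℝ) < t := ht
    have hxre : b.re / 2 ≤ x.re := by
      have h1 : |(x - b).re| ≤ ‖x - b‖ := Complex.abs_re_le_norm _
      have h2 : ‖x - b‖ < b.re / 2 := by
        simpa using mem_ball_iff_norm.mp hx
      have h3 := (abs_le.mp (h1.trans h2.le)).1
      have h4 : (x - b).re = x.re - b.re := Complex.sub_re x b
      linarith
    have hnorm : ‖-(↑t * g (-p) x t)‖ = t * (Real.exp (-(x.re * t)) * t ^ (-p)) := by
      rw [norm_neg, norm_mul, norm_g (-p) x ht0.le, Complex.norm_real, Real.norm_eq_abs,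
        _root_.abs_of_pos ht0]
    rw [hnorm]
    have hexp : Real.exp (-(x.re * t)) ≤ Real.exp (-(b.re / 2 * t)) := by
      apply Real.exp_le_exp.mpr
      have : b.re / 2 * t ≤ x.re * t := mul_le_mul_of_nonneg_right hxre ht0.le
      linarith
    calc t * (Real.exp (-(x.re * t)) * t ^ (-p))
        ≤ t * (Real.exp (-(b.re / 2 * t)) * t ^ (-p)) := by
          apply mul_le_mul_of_nonneg_left _ ht0.le
          exact mul_le_mul_of_nonneg_right hexp (Real.rpow_nonneg ht0.le _)
      _ = Real.exp (-(b.re / 2 * t)) * t ^ (1 - p) := by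
          rw [show (1 : ℝ) - p = -p + 1 by ring, Real.rpow_add_one (ne_of_gt ht0)]
          ring
  · -- differentiability in x
    filter_upwards [ae_restrict_mem measurableSet_Ioi] with t _
    intro x _
    have hin : HasDerivAt (fun x : ℂ => -(x * ↑t)) (-↑t) x := by
      exact (((hasDerivAt_id x).mul_const ((t : ℝ) : ℂ)).neg).congr_deriv (by simp)
    have hexp := (Complex.hasDerivAt_exp (-(x * t))).comp x hin
    have := hexp.mul_const (((t ^ (-p) : ℝ)) : ℂ)
    refine this.congr_deriv ?_
    simp only [g]
    ring

lemma F_one {p : ℝ} (hp : 0 < p) (hp1 : p < 1) : F p 1 = Complex.Gamma (1 - (p : ℂ)) := by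
  rw [Complex.Gamma_eq_integral (by simp [Complex.sub_re]; linarith : 0 < ((1 : ℂ) - (p : ℂ)).re)]
  rw [Complex.GammaIntegral]
  apply setIntegral_congr_fun measurableSet_Ioi
  intro t ht
  have ht0 : (0:ℝ) < t := ht
  simp only [g]
  rw [one_mul, ← Complex.ofReal_neg, ← Complex.ofReal_exp, Complex.ofReal_cpow ht0.le,
    show ((-p : ℝ) : ℂ) = 1 - (p : ℂ) - 1 by push_cast; ring]

lemma F_eq {p : ℝ} (hp : 0 < p) (hp1 : p < 1) {b : ℂ} (hb : 0 < b.re) :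
    F p b = Complex.Gamma (1 - (p : ℂ)) * b ^ ((p : ℂ) - 1) := by
  have hb0 : b ≠ 0 := fun h0 => by simp [h0] at hb
  set U : Set ℂ := {z | 0 < z.re} with hU
  have hUopen : IsOpen U := isOpen_lt continuous_const Complex.continuous_re
  have hUconv : Convex ℝ U := convex_halfSpace_re_gt 0
  have hGderiv : ∀ z ∈ U, HasDerivAt (fun w : ℂ => w ^ (1 - (p : ℂ)) * F p w) 0 z := by
    intro z hz
    have hz' : 0 < z.re := hz
    have hz0 : z ≠ 0 := fun h0 => by simp [h0] at hz'
    have hslit : z ∈ Complex.slitPlane := Complex.mem_slitPlane_iff.mpr (Or.inl hz')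
    have hpow : HasDerivAt (fun w : ℂ => w ^ (1 - (p : ℂ)))
        ((1 - (p : ℂ)) * z ^ (1 - (p : ℂ) - 1) * 1) z :=
      (hasDerivAt_id z).cpow_const hslit
    have hprod := hpow.mul (F_hasDeriv hp hp1 hz')
    refine hprod.congr_deriv ?_
    rw [Complex.cpow_sub _ _ hz0, Complex.cpow_one]
    field_simp
    ring
  have hGdiff : DifferentiableOn ℂ (fun w : ℂ => w ^ (1 - (p : ℂ)) * F p w) U :=
    fun z hz => ((hGderiv z hz).differentiableAt).differentiableWithinAt
  have hmem_b : b ∈ U := hb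
  have hmem_1 : (1 : ℂ) ∈ U := by simp [hU]
  have hconst : b ^ (1 - (p : ℂ)) * F p b = (1 : ℂ) ^ (1 - (p : ℂ)) * F p 1 := by
    apply hUconv.is_const_of_fderivWithin_eq_zero hGdiff _ hmem_b hmem_1
    intro z hz
    rw [fderivWithin_of_isOpen hUopen hz, ((hGderiv z hz).hasFDerivAt).fderiv]
    ext w
    simp
  rw [Complex.one_cpow, one_mul, F_one hp hp1] at hconst
  have hbpow : b ^ ((p : ℂ) - 1) * b ^ (1 - (p : ℂ)) = 1 := by
    rw [← Complex.cpow_add _ _ hb0]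
    norm_num
  calc F p b = (b ^ ((p : ℂ) - 1) * b ^ (1 - (p : ℂ))) * F p b := by rw [hbpow, one_mul]
    _ = b ^ ((p : ℂ) - 1) * (b ^ (1 - (p : ℂ)) * F p b) := by ring
    _ = b ^ ((p : ℂ) - 1) * Complex.Gamma (1 - (p : ℂ)) := by rw [hconst]
    _ = Complex.Gamma (1 - (p : ℂ)) * b ^ ((p : ℂ) - 1) := mul_comm _ _

lemma core {p β : ℝ} (hp : 0 < p) (hp1 : p < 1) (hβ : 0 < β) :
    (∫ t in Ioc 0 β, g (-p) Complex.I t)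
      + Complex.I⁻¹ * Complex.exp (-(Complex.I * β)) * ((β ^ (-p) : ℝ) : ℂ)
      + (((-p : ℝ) : ℂ) / Complex.I) * ∫ t in Ioi β, g (-p - 1) Complex.I t
    = Complex.Gamma (1 - (p : ℂ)) * Complex.I ^ ((p : ℂ) - 1) := by
  set b : ℕ → ℂ := fun n => ((((n : ℝ) + 1)⁻¹ : ℝ) : ℂ) + Complex.I with hbdef
  have hbre : ∀ n, (b n).re = ((n : ℝ) + 1)⁻¹ := by
    intro n
    rw [hbdef]
    simp only [Complex.add_re, Complex.ofReal_re, Complex.I_re, add_zero]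
  have hbrepos : ∀ n, 0 < (b n).re := fun n => by rw [hbre]; positivity
  have hbtend : Tendsto b atTop (𝓝 Complex.I) := by
    have h1 : Tendsto (fun n : ℕ => (((n : ℝ) + 1)⁻¹ : ℝ)) atTop (𝓝 0) := by
      simpa [one_div] using tendsto_one_div_add_atTop_nhds_zero_nat (𝕜 := ℝ)
    have h2 := ((Complex.continuous_ofReal.tendsto (0 : ℝ)).comp h1).add_const Complex.I
    rw [hbdef]
    simpa [Function.comp] using h2
  -- the identity for each n
  have eqn : ∀ n, (∫ t in Ioc 0 β, g (-p) (b n) t)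
      + (b n)⁻¹ * Complex.exp (-(b n * β)) * ((β ^ (-p) : ℝ) : ℂ)
      + (((-p : ℝ) : ℂ) / (b n)) * ∫ t in Ioi β, g (-p - 1) (b n) t
      = Complex.Gamma (1 - (p : ℂ)) * (b n) ^ ((p : ℂ) - 1) := by
    intro n
    have hbn := hbrepos n
    have hInt1 : IntegrableOn (g (-p) (b n)) (Ioc 0 β) := int_g_Ioc hbn.le (by linarith) hβ
    have hInt2 : IntegrableOn (g (-p) (b n)) (Ioi β) :=
      (int_g0 hbn (by linarith)).mono_set (Ioi_subset_Ioi hβ.le)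
    have hInt3 : IntegrableOn (g (-p - 1) (b n)) (Ioi β) :=
      int_g_tail hbn.le (by linarith) hβ
    have hsplit : F p (b n) = (∫ t in Ioc 0 β, g (-p) (b n) t) + ∫ t in Ioi β, g (-p) (b n) t := by
      rw [F, ← Ioc_union_Ioi_eq_Ioi hβ.le]
      exact setIntegral_union (Ioc_disjoint_Ioi le_rfl) measurableSet_Ioi hInt1 hInt2
    have hibp := ibp hbn (le_of_lt hβ) (Or.inl hβ.ne') hInt2 hInt3
    rw [← F_eq hp hp1 hbn, hsplit, hibp]
    ring
  -- limits
  have hcontx : ∀ r : ℝ, ∀ t : ℝ, Continuous (fun x : ℂ => g r x t) := by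
    intro r t
    exact (Complex.continuous_exp.comp ((continuous_id.mul continuous_const).neg)).mul
      continuous_const
  have hlimA : Tendsto (fun n => ∫ t in Ioc 0 β, g (-p) (b n) t) atTop
      (𝓝 (∫ t in Ioc 0 β, g (-p) Complex.I t)) := by
    apply tendsto_integral_of_dominated_convergence (fun t => t ^ (-p))
      (fun n => meas_g_Ioc (-p) (b n))
      ((intervalIntegrable_iff_integrableOn_Ioc_of_le hβ.le).mp
        (intervalIntegral.intervalIntegrable_rpow' (by linarith)))
    · intro n
      filter_upwards [ae_restrict_mem measurableSet_Ioc] with t ht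
      rw [norm_g (-p) (b n) ht.1.le]
      calc Real.exp (-((b n).re * t)) * t ^ (-p) ≤ 1 * t ^ (-p) :=
            mul_le_mul_of_nonneg_right
              (by rw [Real.exp_le_one_iff]
                  exact neg_nonpos.mpr (mul_nonneg (hbrepos n).le ht.1.le))
              (Real.rpow_nonneg ht.1.le _)
        _ = t ^ (-p) := one_mul _
    · exact Eventually.of_forall fun t => (((hcontx (-p) t).tendsto Complex.I).comp hbtend)
  have hlimK : Tendsto (fun n => ∫ t in Ioi β, g (-p - 1) (b n) t) atTop
      (𝓝 (∫ t in Ioi β, g (-p - 1) Complex.I t)) := by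
    apply tendsto_integral_of_dominated_convergence (fun t => t ^ (-p - 1))
      (fun n => meas_g (-p - 1) (b n) hβ.le)
      (integrableOn_Ioi_rpow_of_lt (by linarith) hβ)
    · intro n
      filter_upwards [ae_restrict_mem measurableSet_Ioi] with t ht
      have ht0 : (0:ℝ) < t := hβ.trans ht
      rw [norm_g (-p - 1) (b n) ht0.le]
      calc Real.exp (-((b n).re * t)) * t ^ (-p - 1) ≤ 1 * t ^ (-p - 1) :=
            mul_le_mul_of_nonneg_right
              (by rw [Real.exp_le_one_iff]
                  exact neg_nonpos.mpr (mul_nonneg (hbrepos n).le ht0.le))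
              (Real.rpow_nonneg ht0.le _)
        _ = t ^ (-p - 1) := one_mul _
    · exact Eventually.of_forall fun t => (((hcontx (-p - 1) t).tendsto Complex.I).comp hbtend)
  have hlimB : Tendsto (fun n => (b n)⁻¹ * Complex.exp (-(b n * β)) * ((β ^ (-p) : ℝ) : ℂ))
      atTop (𝓝 (Complex.I⁻¹ * Complex.exp (-(Complex.I * β)) * ((β ^ (-p) : ℝ) : ℂ))) := by
    apply Tendsto.mul_const
    exact (hbtend.inv₀ Complex.I_ne_zero).mul
      ((Complex.continuous_exp.tendsto _).comp ((hbtend.mul_const ((β : ℝ) : ℂ)).neg))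
  have hlimC : Tendsto (fun n => (((-p : ℝ) : ℂ) / (b n)) * ∫ t in Ioi β, g (-p - 1) (b n) t)
      atTop (𝓝 ((((-p : ℝ) : ℂ) / Complex.I) * ∫ t in Ioi β, g (-p - 1) Complex.I t)) :=
    (tendsto_const_nhds.div hbtend Complex.I_ne_zero).mul hlimK
  have hR : Tendsto (fun n => Complex.Gamma (1 - (p : ℂ)) * (b n) ^ ((p : ℂ) - 1)) atTop
      (𝓝 (Complex.Gamma (1 - (p : ℂ)) * Complex.I ^ ((p : ℂ) - 1))) := by
    apply Tendsto.const_mul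
    exact ((continuousAt_cpow_const
      (Complex.mem_slitPlane_iff.mpr (Or.inr (by simp)))).tendsto).comp hbtend
  have hL := (hlimA.add hlimB).add hlimC
  rw [tendsto_congr eqn] at hL
  exact tendsto_nhds_unique hL hR

end Stmt1Aux

noncomputable def m (p : ℝ) : ℂ :=
  -Complex.I * Complex.exp (((p * Real.pi / 2 : ℝ) : ℂ) * Complex.I) * Complex.Gamma (1 - (p : ℂ))

theorem stmt1 (p lam β : ℝ) (hp : 0 < p) (hp1 : p < 1) (hlam : 0 < lam) (hβ : 0 < β) :
    ((lam ^ (1 - p) : ℝ) : ℂ) * ∫ s in (0:ℝ)..(β / lam),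
        Complex.exp (-Complex.I * lam * s) * ((s ^ (-p) : ℝ) : ℂ)
      = m p + Complex.I * Complex.exp (-Complex.I * β) / ((β ^ p : ℝ) : ℂ)
        - Complex.I * (p : ℂ) / ((β ^ p : ℝ) : ℂ) *
          ∫ s in Set.Ioi (1:ℝ),
            Complex.exp (-Complex.I * β * s) * ((s ^ (-(1 + p)) : ℝ) : ℂ) := by
  have hlam0 : lam ≠ 0 := hlam.ne'
  have hβ0 : β ≠ 0 := hβ.ne'
  -- `m p` in terms of `I ^ (p - 1)`
  have hm : m p = Complex.Gamma (1 - (p : ℂ)) * Complex.I ^ ((p : ℂ) - 1) := by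
    rw [m, Complex.cpow_def_of_ne_zero Complex.I_ne_zero, Complex.log_I]
    have h1 : ((Real.pi : ℝ) : ℂ) / 2 * Complex.I * ((p : ℂ) - 1)
        = ((p * Real.pi / 2 : ℝ) : ℂ) * Complex.I + -(((Real.pi : ℝ) : ℂ) / 2 * Complex.I) := by
      push_cast; ring
    have h2 : Complex.exp (-(((Real.pi : ℝ) : ℂ) / 2 * Complex.I)) = -Complex.I := by
      rw [show -(((Real.pi : ℝ) : ℂ) / 2 * Complex.I) = ((-(Real.pi / 2) : ℝ) : ℂ) * Complex.I
        by push_cast; ring, Complex.exp_mul_I]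
      rw [← Complex.ofReal_cos, ← Complex.ofReal_sin]
      simp [Real.cos_pi_div_two, Real.sin_pi_div_two, Real.cos_neg, Real.sin_neg]
    rw [h1, Complex.exp_add, h2]
    ring
  have hcore := Stmt1Aux.core hp hp1 hβ
  -- reduction of the left-hand side by scaling
  have hR1 : ((lam ^ (1 - p) : ℝ) : ℂ) * (∫ s in (0:ℝ)..(β / lam),
      Complex.exp (-Complex.I * lam * s) * ((s ^ (-p) : ℝ) : ℂ))
      = ∫ t in Set.Ioc 0 β, Stmt1Aux.g (-p) Complex.I t := by
    have hcongr : ∀ s ∈ Set.uIcc (0:ℝ) (β / lam),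
        Complex.exp (-Complex.I * lam * s) * ((s ^ (-p) : ℝ) : ℂ)
          = ((lam ^ p : ℝ) : ℂ) * Stmt1Aux.g (-p) Complex.I (lam * s) := by
      intro s hs
      rw [Set.uIcc_of_le (by positivity)] at hs
      rcases eq_or_lt_of_le hs.1 with h0 | h0
      · rw [← h0]
        simp [Stmt1Aux.g, Real.zero_rpow (neg_ne_zero.mpr hp.ne'), mul_zero]
      · rw [Stmt1Aux.g]
        have harg : -Complex.I * lam * s = -(Complex.I * ((lam * s : ℝ) : ℂ)) := by
          push_cast; ring
        have hmulr : ((lam * s) ^ (-p) : ℝ) = lam ^ (-p) * s ^ (-p) :=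
          Real.mul_rpow hlam.le h0.le
        have hfac : (lam ^ p * lam ^ (-p) : ℝ) = 1 := by
          rw [← Real.rpow_add hlam]; simp
        rw [harg, hmulr]
        calc Complex.exp (-(Complex.I * ((lam * s : ℝ):ℂ))) * ((s ^ (-p) : ℝ) : ℂ)
            = ((lam ^ p * lam ^ (-p) : ℝ) : ℂ)
              * (Complex.exp (-(Complex.I * ((lam * s : ℝ):ℂ))) * ((s ^ (-p) : ℝ) : ℂ)) := by
              rw [hfac]; simp
          _ = ((lam ^ p : ℝ) : ℂ) * (Complex.exp (-(Complex.I * ((lam * s : ℝ):ℂ)))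
              * ((lam ^ (-p) * s ^ (-p) : ℝ) : ℂ)) := by push_cast; ring
    rw [intervalIntegral.integral_congr hcongr, intervalIntegral.integral_const_mul,
      intervalIntegral.integral_comp_mul_left (Stmt1Aux.g (-p) Complex.I) hlam0,
      show lam * (β / lam) = β by field_simp, mul_zero,
      intervalIntegral.integral_of_le hβ.le, real_smul]
    have h5 : (lam ^ (1 - p) * lam ^ p : ℝ) = lam := by
      rw [← Real.rpow_add hlam]; norm_num
    calc ((lam ^ (1-p) : ℝ) : ℂ) * (((lam ^ p : ℝ) : ℂ) * (((lam⁻¹ : ℝ) : ℂ)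
          * ∫ t in Set.Ioc 0 β, Stmt1Aux.g (-p) Complex.I t))
        = (((lam ^ (1-p) * lam ^ p : ℝ) : ℂ) * ((lam⁻¹ : ℝ) : ℂ))
          * ∫ t in Set.Ioc 0 β, Stmt1Aux.g (-p) Complex.I t := by push_cast; ring
      _ = ∫ t in Set.Ioc 0 β, Stmt1Aux.g (-p) Complex.I t := by
          rw [h5, ← Complex.ofReal_mul, mul_inv_cancel₀ hlam0]; simp
  -- reduction of the tail integral by scaling
  have hR2 : (∫ s in Set.Ioi (1:ℝ),
      Complex.exp (-Complex.I * β * s) * ((s ^ (-(1 + p)) : ℝ) : ℂ))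
      = ((β ^ p : ℝ) : ℂ) * ∫ t in Set.Ioi β, Stmt1Aux.g (-p - 1) Complex.I t := by
    have hcongr2 : ∀ s ∈ Set.Ioi (1:ℝ),
        Complex.exp (-Complex.I * β * s) * ((s ^ (-(1 + p)) : ℝ) : ℂ)
          = ((β ^ (1 + p) : ℝ) : ℂ) * Stmt1Aux.g (-p - 1) Complex.I (β * s) := by
      intro s hs
      have hs0 : (0:ℝ) < s := lt_trans one_pos hs
      rw [Stmt1Aux.g]
      have harg : -Complex.I * β * s = -(Complex.I * ((β * s : ℝ) : ℂ)) := by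
        push_cast; ring
      have hmulr : ((β * s) ^ (-p - 1) : ℝ) = β ^ (-p - 1) * s ^ (-p - 1) :=
        Real.mul_rpow hβ.le hs0.le
      have hexp : (-(1 + p) : ℝ) = -p - 1 := by ring
      have hfac : (β ^ (1 + p) * β ^ (-p - 1) : ℝ) = 1 := by
        rw [← Real.rpow_add hβ, show (1 + p) + (-p - 1) = 0 by ring, Real.rpow_zero]
      rw [harg, hmulr, hexp]
      calc Complex.exp (-(Complex.I * ((β * s : ℝ) : ℂ))) * ((s ^ (-p - 1) : ℝ) : ℂ)
          = ((β ^ (1 + p) * β ^ (-p - 1) : ℝ) : ℂ)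
            * (Complex.exp (-(Complex.I * ((β * s : ℝ) : ℂ))) * ((s ^ (-p - 1) : ℝ) : ℂ)) := by
            rw [hfac]; simp
        _ = ((β ^ (1 + p) : ℝ) : ℂ) * (Complex.exp (-(Complex.I * ((β * s : ℝ) : ℂ)))
            * ((β ^ (-p - 1) * s ^ (-p - 1) : ℝ) : ℂ)) := by push_cast; ring
    rw [MeasureTheory.setIntegral_congr_fun measurableSet_Ioi hcongr2,
      MeasureTheory.integral_const_mul,
      MeasureTheory.integral_comp_mul_left_Ioi (Stmt1Aux.g (-p - 1) Complex.I) 1 hβ,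
      mul_one, real_smul]
    have h6 : (β ^ (1 + p) * β⁻¹ : ℝ) = β ^ p := by
      rw [show (β:ℝ)⁻¹ = β ^ (-1 : ℝ) by rw [Real.rpow_neg_one], ← Real.rpow_add hβ]
      norm_num
    calc ((β ^ (1+p) : ℝ) : ℂ) * (((β⁻¹ : ℝ) : ℂ)
          * ∫ t in Set.Ioi β, Stmt1Aux.g (-p - 1) Complex.I t)
        = ((β ^ (1+p) * β⁻¹ : ℝ) : ℂ) * ∫ t in Set.Ioi β, Stmt1Aux.g (-p - 1) Complex.I t := by
          push_cast; ring
      _ = ((β ^ p : ℝ) : ℂ) * ∫ t in Set.Ioi β, Stmt1Aux.g (-p - 1) Complex.I t := by rw [h6]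
  -- final algebra
  have hC : ((β ^ (-p) : ℝ) : ℂ) = (((β ^ p : ℝ) : ℂ))⁻¹ := by
    rw [Real.rpow_neg hβ.le, Complex.ofReal_inv]
  have hC0 : ((β ^ p : ℝ) : ℂ) ≠ 0 := by
    exact_mod_cast (Real.rpow_pos_of_pos hβ p).ne'
  have hE : Complex.exp (-Complex.I * β) = Complex.exp (-(Complex.I * β)) := by rw [neg_mul]
  rw [hR1, hR2, hE]
  rw [← hm, hC] at hcore
  rw [div_eq_mul_inv] at hcore
  rw [Complex.inv_I] at hcore
  push_cast at hcore
  have hval : (∫ t in Set.Ioc 0 β, Stmt1Aux.g (-p) Complex.I t)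
      = m p + Complex.I * Complex.exp (-(Complex.I * β)) * (((β ^ p : ℝ) : ℂ))⁻¹
        - Complex.I * (p : ℂ) * ∫ t in Set.Ioi β, Stmt1Aux.g (-p - 1) Complex.I t := by
    linear_combination hcore
  rw [hval]
  field_simp
end

section
/- Let f ∈ L¹(ℝ⁺) be absolutely continuous on (0,∞) with f' ∈ L¹(ℝ⁺), and suppose f(s) → ℓ as s → 0⁺. Then λ ∫₀^∞ e^{-iλs} f(s) ds → -iℓ as λ → ∞. -/
open MeasureTheory Filter
open Set Complex
open scoped FourierTransform

private lemma aux_norm_exp (c : ℂ) (s : ℝ) :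
    ‖Complex.exp (-c * s)‖ = Real.exp (-c.re * s) := by
  rw [Complex.norm_exp]
  congr 1
  simp [Complex.mul_re]

private lemma aux_real_exp_integrable (c : ℂ) (hc : 0 < c.re) (a : ℝ) :
    IntegrableOn (fun s : ℝ => Real.exp (-c.re * s)) (Set.Ioi a) := by
  simpa [neg_mul] using exp_neg_integrableOn_Ioi a hc

private lemma aux_exp_integrable (c : ℂ) (hc : 0 < c.re) (a : ℝ) :
    IntegrableOn (fun s : ℝ => Complex.exp (-c * s)) (Set.Ioi a) := by
  apply Integrable.mono' (aux_real_exp_integrable c hc a)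
  · exact (Complex.continuous_exp.comp (by continuity)).aestronglyMeasurable
  · filter_upwards with s
    rw [aux_norm_exp]

private lemma aux_exp_tendsto (c : ℂ) (hc : 0 < c.re) :
    Tendsto (fun s : ℝ => -Complex.exp (-c * s) / c) atTop (nhds 0) := by
  rw [tendsto_zero_iff_norm_tendsto_zero]
  have heq : (fun s : ℝ => ‖-Complex.exp (-c * s) / c‖) = fun s => Real.exp (-c.re * s) / ‖c‖ := by
    funext s
    rw [norm_div, norm_neg, aux_norm_exp]
  rw [heq]
  have htend : Tendsto (fun s : ℝ => c.re * s) atTop atTop :=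
    Tendsto.const_mul_atTop hc tendsto_id
  simpa [Function.comp, neg_mul] using
    ((Real.tendsto_exp_neg_atTop_nhds_zero).comp htend).div_const ‖c‖

private lemma aux_hasDerivAt (c : ℂ) (hc : c ≠ 0) (x : ℝ) :
    HasDerivAt (fun s : ℝ => -Complex.exp (-c * s) / c) (Complex.exp (-c * x)) x := by
  have h1 : HasDerivAt (fun s : ℝ => -c * (s : ℂ)) (-c) x := by
    simpa using (Complex.ofRealCLM.hasDerivAt (x := x)).const_mul (-c)
  have h2 := (h1.cexp).neg.div_const c
  rw [show -(Complex.exp (-c * x) * -c) / c = Complex.exp (-c * x) by field_simp] at h2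
  exact h2

private lemma aux_exp_integral (c : ℂ) (hc : 0 < c.re) (a : ℝ) :
    ∫ s in Set.Ioi a, Complex.exp (-c * s) = Complex.exp (-c * a) / c := by
  have hc0 : c ≠ 0 := fun h => by simp [h] at hc
  have := integral_Ioi_of_hasDerivAt_of_tendsto' (f := fun s : ℝ => -Complex.exp (-c * s) / c)
    (fun x _ => aux_hasDerivAt c hc0 x) (aux_exp_integrable c hc a) (aux_exp_tendsto c hc)
  rw [this]
  field_simp
  ring

private lemma aux_fubini (g : ℝ → ℝ) (hgm : StronglyMeasurable g) (hg : Integrable g)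
    (c : ℂ) (hc : 0 < c.re) :
    ∫ s in Set.Ioi (0:ℝ), Complex.exp (-c * s) * ((∫ t in (0:ℝ)..s, g t : ℝ) : ℂ) =
      (1 / c) * ∫ t in Set.Ioi (0:ℝ), Complex.exp (-c * t) * (g t : ℂ) := by
  have hc0 : c ≠ 0 := fun h => by simp [h] at hc
  set μ := volume.restrict (Set.Ioi (0:ℝ)) with hμ
  set F : ℝ × ℝ → ℂ := fun p => ({q : ℝ × ℝ | q.2 ≤ q.1}).indicator
      (fun q => Complex.exp (-c * q.1) * (g q.2 : ℂ)) p with hF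
  have hFmeas : AEStronglyMeasurable F (μ.prod μ) := by
    apply StronglyMeasurable.aestronglyMeasurable
    apply StronglyMeasurable.indicator
    · have hcont : Continuous fun q : ℝ × ℝ => Complex.exp (-c * q.1) :=
        Complex.continuous_exp.comp (continuous_const.mul
          (Complex.continuous_ofReal.comp continuous_fst))
      exact hcont.stronglyMeasurable.mul
        ((Complex.continuous_ofReal.comp_stronglyMeasurable hgm).comp_measurable measurable_snd)
    · exact measurableSet_le measurable_snd measurable_fst
  have hFint : Integrable F (μ.prod μ) := by
    apply Integrable.mono'
      (Integrable.mul_prod (aux_real_exp_integrable c hc 0) hg.norm.restrict) hFmeas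
    filter_upwards with p
    by_cases hp : p.2 ≤ p.1
    · have : F p = Complex.exp (-c * p.1) * (g p.2 : ℂ) := by
        simp [hF, Set.indicator_apply, hp]
      rw [this, norm_mul, aux_norm_exp, Complex.norm_real]
    · have : F p = 0 := by simp [hF, Set.indicator_apply, hp]
      rw [this, norm_zero]
      positivity
  have swap : ∫ s, (∫ t, F (s, t) ∂μ) ∂μ = ∫ t, (∫ s, F (s, t) ∂μ) ∂μ :=
    integral_integral_swap (f := fun s t => F (s, t)) hFint
  have lhs_eq : ∫ s, (∫ t, F (s, t) ∂μ) ∂μ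
      = ∫ s in Set.Ioi (0:ℝ), Complex.exp (-c * s) * ((∫ t in (0:ℝ)..s, g t : ℝ) : ℂ) := by
    apply setIntegral_congr_fun measurableSet_Ioi
    intro s hs
    show (∫ t, F (s, t) ∂μ) = Complex.exp (-c * s) * ((∫ t in (0:ℝ)..s, g t : ℝ) : ℂ)
    have h1 : (fun t => F (s, t)) =
        (Set.Iic s).indicator (fun t => Complex.exp (-c * s) * (g t : ℂ)) := by
      funext t
      simp [hF, Set.indicator_apply]
    rw [h1, integral_indicator measurableSet_Iic, hμ,
      Measure.restrict_restrict measurableSet_Iic,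
      show Set.Iic s ∩ Set.Ioi 0 = Set.Ioc 0 s by ext x; simp [and_comm],
      integral_const_mul, intervalIntegral.integral_of_le (le_of_lt hs)]
    rw [show ((fun a : ℝ => ((g a : ℂ))) = fun a : ℝ => ((RCLike.ofReal (g a) : ℂ))) from rfl,
      integral_ofReal]
    rfl
  have rhs_eq : ∫ t, (∫ s, F (s, t) ∂μ) ∂μ
      = ∫ t in Set.Ioi (0:ℝ), (1 / c) * (Complex.exp (-c * t) * (g t : ℂ)) := by
    apply setIntegral_congr_fun measurableSet_Ioi
    intro t ht
    show (∫ s, F (s, t) ∂μ) = (1 / c) * (Complex.exp (-c * t) * (g t : ℂ))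
    have h1 : (fun s => F (s, t)) =
        (Set.Ici t).indicator (fun s => Complex.exp (-c * s) * (g t : ℂ)) := by
      funext s
      simp [hF, Set.indicator_apply]
    rw [h1, integral_indicator measurableSet_Ici, hμ,
      Measure.restrict_restrict measurableSet_Ici,
      show Set.Ici t ∩ Set.Ioi 0 = Set.Ici t from
        Set.inter_eq_left.mpr (fun x hx => Set.mem_Ioi.mpr (lt_of_lt_of_le (Set.mem_Ioi.mp ht) (Set.mem_Ici.mp hx))),
      integral_mul_const, integral_Ici_eq_integral_Ioi, aux_exp_integral c hc t]
    ring
  rw [← lhs_eq, swap, rhs_eq, integral_const_mul]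

private lemma aux_tendsto_eps (h : ℝ → ℝ) (hh : IntegrableOn h (Set.Ioi 0)) (lam : ℝ) :
    Tendsto (fun ε : ℝ => ∫ s in Set.Ioi (0:ℝ),
        Complex.exp (-((ε : ℂ) + Complex.I * lam) * s) * (h s : ℂ))
      (nhdsWithin 0 (Set.Ioi 0))
      (nhds (∫ s in Set.Ioi (0:ℝ), Complex.exp (-(Complex.I * lam) * s) * (h s : ℂ))) := by
  apply tendsto_integral_filter_of_dominated_convergence (fun s => ‖h s‖)
  · filter_upwards with ε
    exact (Complex.continuous_exp.comp
        (continuous_const.mul Complex.continuous_ofReal)).aestronglyMeasurable.mul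
      (Complex.continuous_ofReal.comp_aestronglyMeasurable hh.1)
  · filter_upwards [eventually_mem_nhdsWithin] with ε hε
    filter_upwards [ae_restrict_mem measurableSet_Ioi] with s hs
    rw [norm_mul, aux_norm_exp, Complex.norm_real]
    have hre : ((ε : ℂ) + Complex.I * lam).re = ε := by simp
    rw [hre]
    have h1 : Real.exp (-ε * s) ≤ 1 := by
      rw [Real.exp_le_one_iff]
      have h2 : (0:ℝ) < ε := hε
      have h3 : (0:ℝ) < s := hs
      nlinarith
    exact mul_le_of_le_one_left (norm_nonneg _) h1
  · exact hh.norm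
  · filter_upwards with s
    have hcont : Continuous fun ε : ℝ =>
        Complex.exp (-((ε : ℂ) + Complex.I * lam) * s) * (h s : ℂ) := by
      apply Continuous.mul _ continuous_const
      exact Complex.continuous_exp.comp
        (((Complex.continuous_ofReal.add continuous_const).neg).mul continuous_const)
    have h0 := (hcont.tendsto 0).mono_left
      (nhdsWithin_le_nhds (s := Set.Ioi (0:ℝ)))
    simpa using h0

private lemma aux_RL (g : ℝ → ℝ) (hg : Integrable g) :
    Tendsto (fun lam : ℝ =>
        ∫ t in Set.Ioi (0:ℝ), Complex.exp (-(Complex.I * lam) * t) * (g t : ℂ))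
      atTop (nhds 0) := by
  set G0 : ℝ → ℂ := fun t => (Set.Ioi (0:ℝ)).indicator (fun t => ((g t : ℝ) : ℂ)) t with hG0
  have hcomp : Tendsto (fun lam : ℝ => lam / (2 * Real.pi)) atTop (cocompact ℝ) := by
    rw [cocompact_eq_atBot_atTop]
    exact (tendsto_id.atTop_div_const (by positivity)).mono_right le_sup_right
  have hRL := (Real.tendsto_integral_exp_smul_cocompact G0).comp hcomp
  have heq : (fun lam : ℝ => ∫ v : ℝ, 𝐞 (-(v * (lam / (2 * Real.pi)))) • G0 v)
      = fun lam : ℝ =>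
        ∫ t in Set.Ioi (0:ℝ), Complex.exp (-(Complex.I * lam) * t) * (g t : ℂ) := by
    funext lam
    rw [← integral_indicator measurableSet_Ioi]
    congr 1
    funext t
    by_cases ht : t ∈ Set.Ioi (0:ℝ)
    · simp only [hG0, Set.indicator_of_mem ht, Circle.smul_def, Real.fourierChar_apply]
      have harg : 2 * Real.pi * (-(t * (lam / (2 * Real.pi)))) = -(t * lam) := by
        field_simp
      rw [harg]
      congr 1
      push_cast
      ring
    · simp [hG0, Set.indicator_of_notMem ht]
  exact Tendsto.congr (fun lam => congrFun heq lam) hRL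

theorem stmt5 (f f' : ℝ → ℝ) (ℓ : ℝ)
    (hf : IntegrableOn f (Set.Ioi 0))
    (hAC : ∀ a b : ℝ, 0 < a → a ≤ b → f b - f a = ∫ s in a..b, f' s)
    (hf' : IntegrableOn f' (Set.Ioi 0))
    (hlim : Tendsto f (nhdsWithin 0 (Set.Ioi 0)) (nhds ℓ)) :
    Tendsto (fun lam : ℝ => (lam : ℂ) *
        ∫ s in Set.Ioi (0:ℝ), Complex.exp (-Complex.I * lam * s) * (f s : ℂ))
      atTop (nhds (-Complex.I * ℓ)) := by
  -- a measurable representative of `f'` on `(0, ∞)`, extended by zero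
  have hind : AEStronglyMeasurable ((Set.Ioi 0).indicator f') volume :=
    (aestronglyMeasurable_indicator_iff measurableSet_Ioi).mpr hf'.1
  set g : ℝ → ℝ := hind.mk _ with hgdef
  have hgm : StronglyMeasurable g := hind.stronglyMeasurable_mk
  have hgae : (Set.Ioi 0).indicator f' =ᵐ[volume] g := hind.ae_eq_mk
  have hg : Integrable g := ((integrable_indicator_iff measurableSet_Ioi).mpr hf').congr hgae
  set G : ℝ → ℝ := fun s => ∫ t in (0:ℝ)..s, g t with hGdef
  have hGcont : Continuous G :=
    intervalIntegral.continuous_primitive (fun a b => hg.intervalIntegrable) 0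
  -- the fundamental identity `f = ℓ + G` on `(0, ∞)`
  have hA : ∀ s ∈ Set.Ioi (0:ℝ), f s = ℓ + G s := by
    intro s hs
    have hmem : Set.Ioo (0:ℝ) s ∈ nhdsWithin 0 (Set.Ioi 0) :=
      Ioo_mem_nhdsGT_of_mem ⟨le_refl 0, hs⟩
    have hev : ∀ᶠ a in nhdsWithin 0 (Set.Ioi 0), f s - f a = G s - G a := by
      filter_upwards [hmem] with a ha
      rw [hAC a s ha.1 (le_of_lt ha.2)]
      have h2 : ∫ x in a..s, f' x = ∫ x in a..s, g x := by
        apply intervalIntegral.integral_congr_ae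
        filter_upwards [hgae] with x hx hxs
        rw [Set.uIoc_of_le (le_of_lt ha.2)] at hxs
        rw [← hx]
        exact (Set.indicator_of_mem (lt_trans ha.1 hxs.1) f').symm
      rw [h2, hGdef]
      rw [intervalIntegral.integral_interval_sub_left hg.intervalIntegrable
        hg.intervalIntegrable]
    have hlim1 : Tendsto (fun a => f s - f a) (nhdsWithin 0 (Set.Ioi 0)) (nhds (f s - ℓ)) :=
      tendsto_const_nhds.sub hlim
    have hlim2 : Tendsto (fun a => G s - G a) (nhdsWithin 0 (Set.Ioi 0)) (nhds (G s - G 0)) :=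
      tendsto_const_nhds.sub ((hGcont.tendsto 0).mono_left nhdsWithin_le_nhds)
    have h0 : G 0 = 0 := intervalIntegral.integral_same
    have := tendsto_nhds_unique (hlim1.congr' hev) hlim2
    rw [h0, sub_zero] at this
    linarith [this]
  set M : ℝ := ∫ t, ‖g t‖ with hMdef
  have hGbd : ∀ s : ℝ, |G s| ≤ M := by
    intro s
    calc |G s| = ‖∫ t in (0:ℝ)..s, g t‖ := (Real.norm_eq_abs _).symm
      _ ≤ ∫ t in Set.uIoc 0 s, ‖g t‖ :=
          intervalIntegral.norm_integral_le_integral_norm_uIoc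
      _ ≤ M := setIntegral_le_integral hg.norm (by filter_upwards with t using norm_nonneg _)
  -- the identity for a damped exponential
  have identity_eps : ∀ c : ℂ, 0 < c.re →
      ∫ s in Set.Ioi (0:ℝ), Complex.exp (-c * s) * (f s : ℂ) =
        (ℓ : ℂ) / c + (1 / c) * ∫ t in Set.Ioi (0:ℝ), Complex.exp (-c * t) * (g t : ℂ) := by
    intro c hc
    have e1 : ∫ s in Set.Ioi (0:ℝ), Complex.exp (-c * s) * (f s : ℂ)
        = ∫ s in Set.Ioi (0:ℝ),
          (Complex.exp (-c * s) * (ℓ : ℂ) + Complex.exp (-c * s) * (G s : ℂ)) := by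
      apply setIntegral_congr_fun measurableSet_Ioi
      intro s hs
      show Complex.exp (-c * s) * (f s : ℂ)
        = Complex.exp (-c * s) * (ℓ : ℂ) + Complex.exp (-c * s) * (G s : ℂ)
      rw [hA s hs]
      push_cast
      ring
    have i1 : IntegrableOn (fun s : ℝ => Complex.exp (-c * s) * (ℓ : ℂ)) (Set.Ioi 0) :=
      (aux_exp_integrable c hc 0).mul_const _
    have i2 : IntegrableOn (fun s : ℝ => Complex.exp (-c * s) * (G s : ℂ)) (Set.Ioi 0) := by
      apply Integrable.mono' ((aux_real_exp_integrable c hc 0).mul_const M)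
      · exact ((Complex.continuous_exp.comp
          (continuous_const.mul Complex.continuous_ofReal)).mul
          (Complex.continuous_ofReal.comp hGcont)).aestronglyMeasurable
      · filter_upwards with s
        rw [norm_mul, aux_norm_exp, Complex.norm_real, Real.norm_eq_abs]
        exact mul_le_mul_of_nonneg_left (hGbd s) (Real.exp_pos _).le
    rw [e1, integral_add i1 i2, integral_mul_const, aux_exp_integral c hc 0]
    have e2 : ∫ s in Set.Ioi (0:ℝ), Complex.exp (-c * s) * (G s : ℂ)
        = (1 / c) * ∫ t in Set.Ioi (0:ℝ), Complex.exp (-c * t) * (g t : ℂ) := by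
      rw [hGdef]
      exact aux_fubini g hgm hg c hc
    rw [e2]
    have hc0 : c ≠ 0 := fun h => by simp [h] at hc
    rw [show -c * ((0:ℝ):ℂ) = 0 by simp, Complex.exp_zero]
    ring
  -- the key identity for positive `lam`, obtained by letting `ε → 0⁺`
  have hkey : ∀ lam : ℝ, 0 < lam →
      (lam : ℂ) * ∫ s in Set.Ioi (0:ℝ), Complex.exp (-(Complex.I * lam) * s) * (f s : ℂ) =
        -Complex.I * ℓ + (-Complex.I) *
          ∫ t in Set.Ioi (0:ℝ), Complex.exp (-(Complex.I * lam) * t) * (g t : ℂ) := by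
    intro lam hlam
    have hIl : Complex.I * (lam : ℂ) ≠ 0 := by
      intro h
      have := congrArg Complex.im h
      simp at this
      linarith
    have hd : Tendsto (fun ε : ℝ => (ε : ℂ) + Complex.I * lam)
        (nhdsWithin 0 (Set.Ioi 0)) (nhds (Complex.I * lam)) := by
      have : Continuous fun ε : ℝ => (ε : ℂ) + Complex.I * lam :=
        Complex.continuous_ofReal.add continuous_const
      have h0 := (this.tendsto 0).mono_left (nhdsWithin_le_nhds (s := Set.Ioi (0:ℝ)))
      simpa using h0
    have TR : Tendsto (fun ε : ℝ => (ℓ : ℂ) / ((ε : ℂ) + Complex.I * lam)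
          + (1 / ((ε : ℂ) + Complex.I * lam)) *
            ∫ t in Set.Ioi (0:ℝ), Complex.exp (-((ε : ℂ) + Complex.I * lam) * t) * (g t : ℂ))
        (nhdsWithin 0 (Set.Ioi 0))
        (nhds ((ℓ : ℂ) / (Complex.I * lam) + (1 / (Complex.I * lam)) *
          ∫ t in Set.Ioi (0:ℝ), Complex.exp (-(Complex.I * lam) * t) * (g t : ℂ))) := by
      exact (tendsto_const_nhds.div hd hIl).add
        ((tendsto_const_nhds.div hd hIl).mul (aux_tendsto_eps g hg.integrableOn lam))
    have TL := aux_tendsto_eps f hf lam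
    have hev : ∀ᶠ ε : ℝ in nhdsWithin 0 (Set.Ioi 0),
        (∫ s in Set.Ioi (0:ℝ), Complex.exp (-((ε : ℂ) + Complex.I * lam) * s) * (f s : ℂ))
          = (ℓ : ℂ) / ((ε : ℂ) + Complex.I * lam)
            + (1 / ((ε : ℂ) + Complex.I * lam)) *
              ∫ t in Set.Ioi (0:ℝ), Complex.exp (-((ε : ℂ) + Complex.I * lam) * t) * (g t : ℂ) := by
      filter_upwards [eventually_mem_nhdsWithin] with ε hε
      exact identity_eps ((ε : ℂ) + Complex.I * lam) (by simpa using (hε : (0:ℝ) < ε))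
    have heq := tendsto_nhds_unique (TL.congr' hev) TR
    rw [heq, mul_add]
    have hlam0 : ((lam : ℂ)) ≠ 0 := by
      simpa using ne_of_gt hlam
    have hI0 : Complex.I ≠ 0 := Complex.I_ne_zero
    have hIinv : (Complex.I * (lam : ℂ))⁻¹ = -Complex.I / lam := by
      rw [mul_inv, Complex.inv_I]
      ring
    rw [div_eq_mul_inv, one_div, hIinv]
    field_simp
  -- final limit via the Riemann–Lebesgue lemma
  have hRLg := aux_RL g hg
  have hfinal : Tendsto (fun lam : ℝ => -Complex.I * (ℓ : ℂ) + (-Complex.I) *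
      ∫ t in Set.Ioi (0:ℝ), Complex.exp (-(Complex.I * lam) * t) * (g t : ℂ))
      atTop (nhds (-Complex.I * (ℓ : ℂ) + (-Complex.I) * 0)) :=
    tendsto_const_nhds.add (hRLg.const_mul (-Complex.I))
  rw [mul_zero, add_zero] at hfinal
  refine Tendsto.congr' ?_ hfinal
  filter_upwards [eventually_gt_atTop 0] with lam hlam
  have h1 : ∀ s : ℝ, -Complex.I * (lam : ℂ) * (s : ℂ) = -(Complex.I * lam) * s := by
    intro s; ring
  calc -Complex.I * (ℓ : ℂ) + (-Complex.I) *
        ∫ t in Set.Ioi (0:ℝ), Complex.exp (-(Complex.I * lam) * t) * (g t : ℂ)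
      = (lam : ℂ) * ∫ s in Set.Ioi (0:ℝ),
          Complex.exp (-(Complex.I * lam) * s) * (f s : ℂ) := (hkey lam hlam).symm
    _ = (lam : ℂ) * ∫ s in Set.Ioi (0:ℝ),
          Complex.exp (-Complex.I * lam * s) * (f s : ℂ) := by
        simp_rw [h1]
end
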